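/- arXiv:1912.11661 — 3 statements merged into one kernel-verified Lean document; each statement's English description precedes it below -/
import Mathlib

section
/- Let α, t > 0 and q(0) > 0. Then sup { √(2αt)·u + q(0)·v : u² + v ≤ 1, 0 ≤ u ≤ 1, 0 ≤ v ≤ 1 } equals q(0) + αt/(2q(0)) if t < 2q(0)²/α, and equals √(2αt) if t ≥ 2q(0)²/α. -/
theorem sup_linear_constraint (α t q0 : ℝ) (hα : 0 < α) (ht : 0 < t) (hq0 : 0 < q0) :
    sSup {x : ℝ | ∃ u v : ℝ, 0 ≤ u ∧ u ≤ 1 ∧ 0 ≤ v ∧ v ≤ 1 ∧ u ^ 2 + v ≤ 1 ∧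
        x = Real.sqrt (2 * α * t) * u + q0 * v} =
      if t < 2 * q0 ^ 2 / α then q0 + α * t / (2 * q0) else Real.sqrt (2 * α * t) := by
  set s := Real.sqrt (2 * α * t) with hs
  have hs0 : 0 ≤ s := Real.sqrt_nonneg _
  have hs2 : s ^ 2 = 2 * α * t := Real.sq_sqrt (by positivity)
  apply IsGreatest.csSup_eq
  constructor
  · by_cases h : t < 2 * q0 ^ 2 / α
    · have h' : t * α < 2 * q0 ^ 2 := (lt_div_iff₀ hα).1 h
      have hsle : s ≤ 2 * q0 := by nlinarith
      have hu0 : 0 ≤ s / (2 * q0) := by positivity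
      have hu1 : s / (2 * q0) ≤ 1 := by
        rw [div_le_one (by positivity)]; linarith
      simp only [if_pos h, Set.mem_setOf_eq]
      refine ⟨s / (2 * q0), 1 - (s / (2 * q0)) ^ 2, hu0, hu1, ?_, ?_, by ring_nf; nlinarith, ?_⟩
      · nlinarith [sq_nonneg (s / (2 * q0))]
      · nlinarith [sq_nonneg (s / (2 * q0))]
      · field_simp
        linear_combination (-1 : ℝ) * hs2
    · simp only [if_neg h, Set.mem_setOf_eq]
      exact ⟨1, 0, by norm_num⟩
  · rintro x ⟨u, v, hu0, hu1, hv0, hv1, huv, rfl⟩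
    by_cases h : t < 2 * q0 ^ 2 / α
    · simp only [if_pos h]
      rw [← sub_le_iff_le_add', le_div_iff₀ (by positivity : (0:ℝ) < 2 * q0)]
      nlinarith [sq_nonneg (2 * q0 * u - s), mul_le_mul_of_nonneg_left huv hq0.le]
    · simp only [if_neg h]
      push_neg at h
      have h' : 2 * q0 ^ 2 ≤ t * α := (div_le_iff₀ hα).1 h
      have hsge : 2 * q0 ≤ s := by nlinarith
      nlinarith [mul_nonneg (sub_nonneg.2 hu1) (by nlinarith : 0 ≤ s - q0 * (1 + u)),
        mul_le_mul_of_nonneg_left huv hq0.le]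
end

section
/- Let f(x,θ) = (αx + βx²)·exp(θ(−1 + αx + βx² − mx²)) + (1 − αx − βx²)·exp(θ(αx + βx² − mx²)) with α, β > 0 and 0 < m < β. Then θ = 0 solves f(0,θ) = 1, and if θ(x) is a differentiable function with θ(0) = 0 and f(x,θ(x)) = 1 for all x near 0, and θ is not identically zero to first order, then θ'(0) = 2m/α. -/
open Real Filter Topology

noncomputable def psiAux (y : ℝ) : ℝ :=
  if y = 0 then 1/2 else (Real.exp (-y) - 1 + y) / y ^ 2

lemma one_sub_exp_neg_eq (y : ℝ) : 1 - Real.exp (-y) = y - y ^ 2 * psiAux y := by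
  unfold psiAux
  split_ifs with h
  · simp [h]
  · field_simp
    ring

lemma psiAux_bound {y : ℝ} (h : |y| ≤ 1) : |psiAux y - 1/2| ≤ |y| := by
  unfold psiAux
  split_ifs with hy
  · simp [hy]
  · have hb := Real.exp_bound (x := -y) (by simpa using h) (n := 3) (by norm_num)
    have hsum : ∑ i ∈ Finset.range 3, (-y) ^ i / (Nat.factorial i : ℝ)
        = 1 - y + y ^ 2 / 2 := by
      simp [Finset.sum_range_succ, Nat.factorial]
      ring
    rw [hsum] at hb
    have hy2 : (0:ℝ) < y ^ 2 := by positivity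
    have hb2 : |Real.exp (-y) - (1 - y + y ^ 2 / 2)| ≤ |y| * y ^ 2 := by
      refine hb.trans ?_
      rw [abs_neg]
      have h2 : |y| ^ 3 = |y| * y ^ 2 := by rw [pow_succ, sq_abs]; ring
      have hc : ((Nat.succ 3 : ℝ) / ((Nat.factorial 3 : ℝ) * 3)) ≤ 1 := by
        norm_num [Nat.factorial]
      calc |y| ^ 3 * ((Nat.succ 3 : ℝ) / ((Nat.factorial 3 : ℝ) * 3))
          ≤ |y| ^ 3 * 1 := by
            exact mul_le_mul_of_nonneg_left hc (by positivity)
        _ = |y| * y ^ 2 := by rw [mul_one, h2]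
    have hre : (Real.exp (-y) - 1 + y) / y ^ 2 - 1 / 2
        = (Real.exp (-y) - (1 - y + y ^ 2 / 2)) / y ^ 2 := by
      field_simp; ring
    rw [hre, abs_div, abs_of_pos hy2, div_le_iff₀ hy2]
    exact hb2

lemma psiAux_continuousAt : ContinuousAt psiAux 0 := by
  have hψ0 : psiAux 0 = 1/2 := by simp [psiAux]
  rw [ContinuousAt, hψ0]
  have hev : ∀ᶠ y in 𝓝 (0:ℝ), ‖psiAux y - 1/2‖ ≤ |y| := by
    filter_upwards [Metric.ball_mem_nhds (0:ℝ) one_pos] with y hy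
    exact psiAux_bound (le_of_lt (by simpa [Real.dist_eq] using hy))
  have h0 : Tendsto (fun y : ℝ => |y|) (𝓝 0) (𝓝 0) := by
    simpa using (continuous_abs.tendsto (0:ℝ))
  have := squeeze_zero_norm' hev h0
  have h2 : Tendsto (fun y => psiAux y - 1/2 + 1/2) (𝓝 (0:ℝ)) (𝓝 (0 + 1/2)) :=
    this.add tendsto_const_nhds
  simpa using h2

theorem tilting_parameter_first_order
    (α β m : ℝ) (hα : 0 < α) (hβ : 0 < β) (hm : 0 < m) (hmβ : m < β) :
    (let f : ℝ → ℝ → ℝ := fun x θ =>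
      (α * x + β * x ^ 2) * Real.exp (θ * (-1 + α * x + β * x ^ 2 - m * x ^ 2)) +
        (1 - α * x - β * x ^ 2) * Real.exp (θ * (α * x + β * x ^ 2 - m * x ^ 2));
    f 0 0 = 1 ∧
    ∀ θ : ℝ → ℝ, DifferentiableAt ℝ θ 0 → θ 0 = 0 →
      (∀ᶠ x in nhds (0:ℝ), f x (θ x) = 1) →
      deriv θ 0 ≠ 0 → deriv θ 0 = 2 * m / α) := by
  intro f
  constructor
  · simp [f]
  intro θ hθd hθ0 hfeq ha
  set a := deriv θ 0 with hadef
  -- slope tendsto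
  have hslope : Tendsto (fun x => θ x / x) (𝓝[≠] (0:ℝ)) (𝓝 a) := by
    have hd := hθd.hasDerivAt
    rw [hasDerivAt_iff_tendsto_slope] at hd
    refine hd.congr (fun x => ?_)
    simp [slope_def_field, hθ0, div_eq_div_iff]
  -- eventually θ x ≠ 0
  have hne : ∀ᶠ x in 𝓝[≠] (0:ℝ), θ x ≠ 0 := by
    have : ∀ᶠ z in 𝓝 a, z ≠ 0 := isOpen_ne.mem_nhds ha
    filter_upwards [hslope.eventually this] with x hx
    intro h0
    apply hx
    simp [h0]
  have hEq : ∀ᶠ x in 𝓝[≠] (0:ℝ), f x (θ x) = 1 := hfeq.filter_mono nhdsWithin_le_nhds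
  -- key identity
  have key : ∀ᶠ x in 𝓝[≠] (0:ℝ),
      (θ x / x) * ((α + β * x) * psiAux (θ x)
        - (x * (α + (β - m) * x) ^ 2) * psiAux (θ x * (α * x + β * x ^ 2 - m * x ^ 2))) = m := by
    filter_upwards [hne, hEq, self_mem_nhdsWithin] with x hθx heq hx
    simp only [f] at heq
    set t := θ x with htdef
    set B := α * x + β * x ^ 2 - m * x ^ 2 with hBdef
    have harg : t * (-1 + α * x + β * x ^ 2 - m * x ^ 2) = -t + t * B := by
      rw [hBdef]; ring
    rw [harg, Real.exp_add] at heq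
    -- multiply through by exp (-(t*B))
    have hexp : (α * x + β * x ^ 2) * Real.exp (-t) + (1 - α * x - β * x ^ 2)
        = Real.exp (-(t * B)) := by
      refine mul_right_cancel₀ (Real.exp_ne_zero (t * B)) ?_
      rw [← Real.exp_add, neg_add_cancel, Real.exp_zero]
      linear_combination heq
    -- A (1 - exp(-t)) = 1 - exp(-(t B))
    have hAB : (α * x + β * x ^ 2) * (1 - Real.exp (-t)) = 1 - Real.exp (-(t * B)) := by
      rw [← hexp]; ring
    rw [one_sub_exp_neg_eq t, one_sub_exp_neg_eq (t * B)] at hAB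
    -- rearranged: t * (m x²) = t² (A ψ t - B² ψ(tB))
    have hxne : x ≠ 0 := hx
    have hd : (α * x + β * x ^ 2) - B = m * x ^ 2 := by rw [hBdef]; ring
    have h3 : t * (m * x ^ 2)
        = t * (t * ((α * x + β * x ^ 2) * psiAux t - B ^ 2 * psiAux (t * B))) := by
      linear_combination hAB - t * hd
    have h4 := mul_left_cancel₀ hθx h3
    rw [hBdef] at h4
    rw [div_mul_eq_mul_div, div_eq_iff hxne]
    refine mul_right_cancel₀ hxne ?_
    linear_combination (-1 : ℝ) * h4
  -- limits
  have hθcont : Tendsto θ (𝓝[≠] (0:ℝ)) (𝓝 0) := by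
    have := hθd.continuousAt.tendsto
    rw [hθ0] at this
    exact this.mono_left nhdsWithin_le_nhds
  have hpsi0 : psiAux 0 = 1/2 := by simp [psiAux]
  have hψ1 : Tendsto (fun x => psiAux (θ x)) (𝓝[≠] (0:ℝ)) (𝓝 (1/2)) := by
    have h := psiAux_continuousAt.tendsto.comp hθcont
    rw [hpsi0] at h
    exact h
  have hprod : Tendsto (fun x => θ x * (α * x + β * x ^ 2 - m * x ^ 2)) (𝓝[≠] (0:ℝ)) (𝓝 0) := by
    have hc : Tendsto (fun x : ℝ => α * x + β * x ^ 2 - m * x ^ 2) (𝓝[≠] (0:ℝ)) (𝓝 0) := by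
      have : Continuous (fun x : ℝ => α * x + β * x ^ 2 - m * x ^ 2) := by continuity
      have := this.tendsto 0
      simp at this
      exact this.mono_left nhdsWithin_le_nhds
    simpa using hθcont.mul hc
  have hψ2 : Tendsto (fun x => psiAux (θ x * (α * x + β * x ^ 2 - m * x ^ 2))) (𝓝[≠] (0:ℝ)) (𝓝 (1/2)) := by
    have h := psiAux_continuousAt.tendsto.comp hprod
    rw [hpsi0] at h
    exact h
  have hAx : Tendsto (fun x : ℝ => α + β * x) (𝓝[≠] (0:ℝ)) (𝓝 α) := by
    have : Continuous (fun x : ℝ => α + β * x) := by continuity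
    have h := this.tendsto 0
    simp at h
    exact h.mono_left nhdsWithin_le_nhds
  have hBx : Tendsto (fun x : ℝ => x * (α + (β - m) * x) ^ 2) (𝓝[≠] (0:ℝ)) (𝓝 0) := by
    have : Continuous (fun x : ℝ => x * (α + (β - m) * x) ^ 2) := by continuity
    have h := this.tendsto 0
    simp at h
    exact h.mono_left nhdsWithin_le_nhds
  have L : Tendsto (fun x => (θ x / x) * ((α + β * x) * psiAux (θ x)
        - (x * (α + (β - m) * x) ^ 2) * psiAux (θ x * (α * x + β * x ^ 2 - m * x ^ 2))))
      (𝓝[≠] (0:ℝ)) (𝓝 (a * (α * (1/2) - 0 * (1/2)))) :=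
    hslope.mul ((hAx.mul hψ1).sub (hBx.mul hψ2))
  have Lconst : Tendsto (fun _ : ℝ => m) (𝓝[≠] (0:ℝ)) (𝓝 (a * (α * (1/2) - 0 * (1/2)))) :=
    L.congr' (by filter_upwards [key] with x hx using hx)
  have hmm : m = a * (α * (1/2) - 0 * (1/2)) :=
    tendsto_nhds_unique tendsto_const_nhds Lconst
  have : m = a * α / 2 := by linarith [hmm]
  field_simp
  linarith [this]
end

section
/- Let Y_i^{(1)} and Y_i^{(2)} (i ≤ N) be independent random variables where the Y_i^{(1)} are i.i.d. and the Y_i^{(2)} are i.i.d., each family independent of the other, with P(Y_i^{(j)} ≥ a_N^{(j)}) = 1/N for scaling sequences a_N^{(j)} → ∞, with max_{i≤N} Y_i^{(j)}/a_N^{(j)} → 1 in probability, and with lim_{t→∞} (−log P(Y^{(j)} ≥ u t))/(−log P(Y^{(j)} ≥ t)) = h^{(j)}(u) for all u ∈ [0,1]. Then for any u^{(1)}, u^{(2)} ∈ [0,1] with h^{(1)}(u^{(1)}) + h^{(2)}(u^{(2)}) < 1, the probability that there exists i ≤ N with Y_i^{(1)} ≥ u^{(1)} a_N^{(1)} and Y_i^{(2)}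 ≥ u^{(2)} a_N^{(2)} tends to 1 as N → ∞; hence liminf_N max_{i≤N} (Y_i^{(1)}/a_N^{(1)} + Y_i^{(2)}/a_N^{(2)}) ≥ u^{(1)} + u^{(2)} in probability. -/
open MeasureTheory ProbabilityTheory Filter Set

lemma aux_compl_prod {Ω : Type*} [mΩ : MeasurableSpace Ω] (μ : Measure Ω) [IsProbabilityMeasure μ]
    (Y : Fin 2 → ℕ → Ω → ℝ) (hmeas : ∀ j i, Measurable (Y j i))
    (hindep : iIndepFun (fun p : Fin 2 × ℕ => Y p.1 p.2) μ)
    (c₁ c₂ : ℝ) (n : ℕ) :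
    μ (⋂ i ∈ Finset.range n, ({ω | c₁ ≤ Y 0 i ω} ∩ {ω | c₂ ≤ Y 1 i ω})ᶜ)
      = ∏ i ∈ Finset.range n, (1 - μ ({ω | c₁ ≤ Y 0 i ω} ∩ {ω | c₂ ≤ Y 1 i ω})) := by
  have hii : iIndep (fun p : Fin 2 × ℕ =>
      MeasurableSpace.comap (fun ω => Y p.1 p.2 ω) inferInstance) μ :=
    (iIndepFun_iff_iIndep _ _ _).1 hindep
  have hle : ∀ p : Fin 2 × ℕ,
      MeasurableSpace.comap (fun ω => Y p.1 p.2 ω) inferInstance ≤ mΩ :=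
    fun p => (hmeas p.1 p.2).comap_le
  have hbase : ∀ (j : Fin 2) (i : ℕ) (c : ℝ),
      MeasurableSet[MeasurableSpace.comap (fun ω => Y j i ω) inferInstance]
        {ω | c ≤ Y j i ω} := fun j i c => ⟨Ici c, measurableSet_Ici, rfl⟩
  have hmeasB : ∀ i : ℕ, MeasurableSet ({ω | c₁ ≤ Y 0 i ω} ∩ {ω | c₂ ≤ Y 1 i ω}) :=
    fun i => (measurableSet_le measurable_const (hmeas 0 i)).inter
      (measurableSet_le measurable_const (hmeas 1 i))
  induction n with
  | zero => simp
  | succ n ih =>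
    have hdis : Disjoint {p : Fin 2 × ℕ | p.2 = n} {p : Fin 2 × ℕ | p.2 < n} := by
      rw [Set.disjoint_left]
      rintro ⟨j, i⟩ h1 h2
      simp only [Set.mem_setOf_eq] at h1 h2
      omega
    have hInd := indep_iSup_of_disjoint hle hii hdis
    have hT : MeasurableSet[⨆ p ∈ {p : Fin 2 × ℕ | p.2 = n},
        MeasurableSpace.comap (fun ω => Y p.1 p.2 ω) inferInstance]
        (({ω | c₁ ≤ Y 0 n ω} ∩ {ω | c₂ ≤ Y 1 n ω})ᶜ) := by
      refine MeasurableSet.compl (MeasurableSet.inter ?_ ?_)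
      · exact le_iSup₂ (f := fun (p : Fin 2 × ℕ) (_ : p ∈ {p : Fin 2 × ℕ | p.2 = n}) =>
          MeasurableSpace.comap (fun ω => Y p.1 p.2 ω) inferInstance)
          ((0 : Fin 2), n) rfl _ (hbase 0 n c₁)
      · exact le_iSup₂ (f := fun (p : Fin 2 × ℕ) (_ : p ∈ {p : Fin 2 × ℕ | p.2 = n}) =>
          MeasurableSpace.comap (fun ω => Y p.1 p.2 ω) inferInstance)
          ((1 : Fin 2), n) rfl _ (hbase 1 n c₂)
    have hS : MeasurableSet[⨆ p ∈ {p : Fin 2 × ℕ | p.2 < n},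
        MeasurableSpace.comap (fun ω => Y p.1 p.2 ω) inferInstance]
        (⋂ i ∈ Finset.range n, ({ω | c₁ ≤ Y 0 i ω} ∩ {ω | c₂ ≤ Y 1 i ω})ᶜ) := by
      refine MeasurableSet.biInter (Finset.range n).countable_toSet (fun i hi => ?_)
      replace hi : i < n := Multiset.mem_range.1 hi
      refine MeasurableSet.compl (MeasurableSet.inter ?_ ?_)
      · exact le_iSup₂ (f := fun (p : Fin 2 × ℕ) (_ : p ∈ {p : Fin 2 × ℕ | p.2 < n}) =>
          MeasurableSpace.comap (fun ω => Y p.1 p.2 ω) inferInstance)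
          ((0 : Fin 2), i) hi _ (hbase 0 i c₁)
      · exact le_iSup₂ (f := fun (p : Fin 2 × ℕ) (_ : p ∈ {p : Fin 2 × ℕ | p.2 < n}) =>
          MeasurableSpace.comap (fun ω => Y p.1 p.2 ω) inferInstance)
          ((1 : Fin 2), i) hi _ (hbase 1 i c₂)
    rw [Finset.range_add_one, Finset.set_biInter_insert,
      Finset.prod_insert Finset.notMem_range_self, ← ih,
      (Indep_iff _ _ _).1 hInd _ _ hT hS,
      prob_compl_eq_one_sub (hmeasB n)]

theorem extreme_values_of_sums_lower_bound
    {Ω : Type*} [MeasurableSpace Ω] (μ : Measure Ω) [IsProbabilityMeasure μ]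
    (Y : Fin 2 → ℕ → Ω → ℝ)
    (hmeas : ∀ j i, Measurable (Y j i))
    (hindep : iIndepFun (fun p : Fin 2 × ℕ => Y p.1 p.2) μ)
    (hident : ∀ j i, IdentDistrib (Y j i) (Y j 0) μ μ)
    (a : Fin 2 → ℕ → ℝ)
    (ha_top : ∀ j, Tendsto (a j) atTop atTop)
    (ha_quantile : ∀ j, ∀ N : ℕ, 1 ≤ N →
      μ {ω | a j N ≤ Y j 0 ω} = (N : ENNReal)⁻¹)
    (hstable : ∀ j, ∀ ε : ℝ, 0 < ε →
      Tendsto (fun N : ℕ =>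
        μ {ω | ε < |(⨆ i : Fin N, Y j i ω) / a j N - 1|}) atTop (nhds 0))
    (h : Fin 2 → ℝ → ℝ)
    (htail : ∀ j, ∀ u ∈ Icc (0:ℝ) 1,
      Tendsto (fun t : ℝ =>
        (-Real.log (μ {ω | u * t ≤ Y j 0 ω}).toReal) /
          (-Real.log (μ {ω | t ≤ Y j 0 ω}).toReal)) atTop (nhds (h j u))) :
    ∀ u₁ ∈ Icc (0:ℝ) 1, ∀ u₂ ∈ Icc (0:ℝ) 1, h 0 u₁ + h 1 u₂ < 1 →
      (Tendsto (fun N : ℕ =>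
          μ {ω | ∃ i : Fin N, u₁ * a 0 N ≤ Y 0 i ω ∧ u₂ * a 1 N ≤ Y 1 i ω})
        atTop (nhds 1)) ∧
      (∀ ε : ℝ, 0 < ε →
        Tendsto (fun N : ℕ =>
          μ {ω | (⨆ i : Fin N, (Y 0 i ω / a 0 N + Y 1 i ω / a 1 N)) < u₁ + u₂ - ε})
          atTop (nhds 0)) := by
  intro u₁ hu₁ u₂ hu₂ hsum
  -- lower bound on the tail probabilities
  have hlower : ∀ (j : Fin 2) (u : ℝ), u ∈ Icc (0:ℝ) 1 →
      ∀ᶠ N : ℕ in atTop, (N : ENNReal)⁻¹ ≤ μ {ω | u * a j N ≤ Y j 0 ω} := by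
    intro j u hu
    filter_upwards [(ha_top j).eventually_ge_atTop 0, eventually_ge_atTop 1] with N haN hN
    rw [← ha_quantile j N hN]
    exact measure_mono (fun ω hω => le_trans (mul_le_of_le_one_left haN hu.2) hω)
  -- the normalized log-probabilities converge to h j u
  have hs : ∀ (j : Fin 2) (u : ℝ), u ∈ Icc (0:ℝ) 1 →
      Tendsto (fun N : ℕ =>
          (-Real.log ((μ {ω | u * a j N ≤ Y j 0 ω}).toReal)) / Real.log N)
        atTop (nhds (h j u)) := by
    intro j u hu
    refine Tendsto.congr' ?_ ((htail j u hu).comp (ha_top j))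
    filter_upwards [eventually_ge_atTop 1] with N hN
    simp only [Function.comp_apply]
    rw [ha_quantile j N hN]
    simp [ENNReal.toReal_inv, Real.log_inv]
  have hs0 := hs 0 u₁ hu₁
  have hs1 := hs 1 u₂ hu₂
  set r₁ : ℕ → ℝ := fun N => (μ {ω | u₁ * a 0 N ≤ Y 0 0 ω}).toReal with hr₁def
  set r₂ : ℕ → ℝ := fun N => (μ {ω | u₂ * a 1 N ≤ Y 1 0 ω}).toReal with hr₂def
  have hr₁le1 : ∀ N, r₁ N ≤ 1 := fun N => by
    simpa using ENNReal.toReal_mono ENNReal.one_ne_top prob_le_one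
  have hr₂le1 : ∀ N, r₂ N ≤ 1 := fun N => by
    simpa using ENNReal.toReal_mono ENNReal.one_ne_top prob_le_one
  -- step: N * r₁ N * r₂ N → ∞
  have hlogN : Tendsto (fun N : ℕ => Real.log N) atTop atTop :=
    Real.tendsto_log_atTop.comp tendsto_natCast_atTop_atTop
  have hpos : (0:ℝ) < 1 - h 0 u₁ - h 1 u₂ := by linarith
  have hcoef : Tendsto (fun N : ℕ =>
      1 - (-Real.log (r₁ N)) / Real.log N - (-Real.log (r₂ N)) / Real.log N)
      atTop (nhds (1 - h 0 u₁ - h 1 u₂)) :=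
    (tendsto_const_nhds.sub hs0).sub hs1
  have hL : Tendsto (fun N : ℕ =>
      (1 - (-Real.log (r₁ N)) / Real.log N - (-Real.log (r₂ N)) / Real.log N) * Real.log N)
      atTop atTop := hcoef.pos_mul_atTop hpos hlogN
  have hNr : Tendsto (fun N : ℕ => (N : ℝ) * (r₁ N * r₂ N)) atTop atTop := by
    refine Tendsto.congr' ?_ (Real.tendsto_exp_atTop.comp hL)
    filter_upwards [eventually_ge_atTop 2, hlower 0 u₁ hu₁, hlower 1 u₂ hu₂] with N h2 hl0 hl1
    have hN1 : (1:ℝ) < (N:ℝ) := by exact_mod_cast h2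
    have hNpos : (0:ℝ) < N := by linarith
    have hlogpos : 0 < Real.log N := Real.log_pos hN1
    have hNinv : (0:ℝ) < (N:ℝ)⁻¹ := by positivity
    have hb0 : (N:ℝ)⁻¹ ≤ r₁ N := by
      simpa [ENNReal.toReal_inv] using ENNReal.toReal_mono (measure_ne_top μ _) hl0
    have hb1 : (N:ℝ)⁻¹ ≤ r₂ N := by
      simpa [ENNReal.toReal_inv] using ENNReal.toReal_mono (measure_ne_top μ _) hl1
    have hr0pos : 0 < r₁ N := lt_of_lt_of_le hNinv hb0
    have hr1pos : 0 < r₂ N := lt_of_lt_of_le hNinv hb1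
    have e0 : (-Real.log (r₁ N)) / Real.log N * Real.log N = -Real.log (r₁ N) :=
      div_mul_cancel₀ _ hlogpos.ne'
    have e1 : (-Real.log (r₂ N)) / Real.log N * Real.log N = -Real.log (r₂ N) :=
      div_mul_cancel₀ _ hlogpos.ne'
    have key : (1 - (-Real.log (r₁ N)) / Real.log N - (-Real.log (r₂ N)) / Real.log N)
        * Real.log N = Real.log ((N : ℝ) * (r₁ N * r₂ N)) := by
      rw [Real.log_mul (ne_of_gt hNpos) (by positivity),
        Real.log_mul hr0pos.ne' hr1pos.ne', sub_mul, sub_mul, one_mul, e0, e1]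
      ring
    simp only [Function.comp_apply, key]
    exact Real.exp_log (by positivity)
  -- product structure of the joint event
  have hprod : ∀ (N i : ℕ),
      μ ({ω | u₁ * a 0 N ≤ Y 0 i ω} ∩ {ω | u₂ * a 1 N ≤ Y 1 i ω})
        = μ {ω | u₁ * a 0 N ≤ Y 0 0 ω} * μ {ω | u₂ * a 1 N ≤ Y 1 0 ω} := by
    intro N i
    have hif : IndepFun (Y 0 i) (Y 1 i) μ :=
      hindep.indepFun (by simp : ((0 : Fin 2), i) ≠ ((1 : Fin 2), i))
    have hpre := hif.measure_inter_preimage_eq_mul (Ici (u₁ * a 0 N)) (Ici (u₂ * a 1 N))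
      measurableSet_Ici measurableSet_Ici
    have h0 : Y 0 i ⁻¹' Ici (u₁ * a 0 N) = {ω | u₁ * a 0 N ≤ Y 0 i ω} := rfl
    have h1 : Y 1 i ⁻¹' Ici (u₂ * a 1 N) = {ω | u₂ * a 1 N ≤ Y 1 i ω} := rfl
    have hid0 := (hident 0 i).measure_mem_eq (measurableSet_Ici (a := u₁ * a 0 N))
    have hid1 := (hident 1 i).measure_mem_eq (measurableSet_Ici (a := u₂ * a 1 N))
    rw [h0, h1] at hpre
    rw [h0] at hid0
    rw [h1] at hid1
    rw [hpre, hid0, hid1]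
    rfl
  -- the complement set and its measure
  set C : ℕ → Set Ω := fun N =>
    ⋂ i ∈ Finset.range N, ({ω | u₁ * a 0 N ≤ Y 0 i ω} ∩ {ω | u₂ * a 1 N ≤ Y 1 i ω})ᶜ
    with hCdef
  have hmeasC : ∀ N, MeasurableSet (C N) := by
    intro N
    refine MeasurableSet.biInter (Finset.range N).countable_toSet (fun i _ => ?_)
    exact ((measurableSet_le measurable_const (hmeas 0 i)).inter
      (measurableSet_le measurable_const (hmeas 1 i))).compl
  have hC : ∀ N : ℕ, μ (C N)
      = (1 - μ {ω | u₁ * a 0 N ≤ Y 0 0 ω} * μ {ω | u₂ * a 1 N ≤ Y 1 0 ω}) ^ N := by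
    intro N
    rw [hCdef]
    rw [aux_compl_prod μ Y hmeas hindep (u₁ * a 0 N) (u₂ * a 1 N) N]
    rw [Finset.prod_congr rfl (fun i _ => by rw [hprod N i])]
    simp [Finset.prod_const, Finset.card_range]
  have hone : ∀ N : ℕ,
      μ {ω | u₁ * a 0 N ≤ Y 0 0 ω} * μ {ω | u₂ * a 1 N ≤ Y 1 0 ω} ≤ 1 :=
    fun N => mul_le_one' prob_le_one prob_le_one
  have hCtoReal : ∀ N : ℕ, (μ (C N)).toReal = (1 - r₁ N * r₂ N) ^ N := by
    intro N
    rw [hC N, ENNReal.toReal_pow, ENNReal.toReal_sub_of_le (hone N) ENNReal.one_ne_top,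
      ENNReal.toReal_one, ENNReal.toReal_mul]
  have hrprod_le1 : ∀ N, r₁ N * r₂ N ≤ 1 := fun N =>
    mul_le_one₀ (hr₁le1 N) ENNReal.toReal_nonneg (hr₂le1 N)
  -- real-valued convergence to 0
  have hreal0 : Tendsto (fun N : ℕ => (1 - r₁ N * r₂ N) ^ N) atTop (nhds 0) := by
    have hupper : Tendsto (fun N : ℕ => Real.exp (-((N:ℝ) * (r₁ N * r₂ N)))) atTop (nhds 0) :=
      Real.tendsto_exp_atBot.comp (tendsto_neg_atTop_atBot.comp hNr)
    refine squeeze_zero' (Eventually.of_forall fun N => ?_)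
      (Eventually.of_forall fun N => ?_) hupper
    · exact pow_nonneg (by linarith [hrprod_le1 N]) N
    · have h1 : 1 - r₁ N * r₂ N ≤ Real.exp (-(r₁ N * r₂ N)) := by
        have := Real.add_one_le_exp (-(r₁ N * r₂ N))
        linarith
      have h2 : (0:ℝ) ≤ 1 - r₁ N * r₂ N := by linarith [hrprod_le1 N]
      calc (1 - r₁ N * r₂ N) ^ N ≤ (Real.exp (-(r₁ N * r₂ N))) ^ N :=
            pow_le_pow_left₀ h2 h1 N
        _ = Real.exp (-((N:ℝ) * (r₁ N * r₂ N))) := by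
            rw [← Real.exp_nat_mul]; ring_nf
  have hmuC0 : Tendsto (fun N : ℕ => μ (C N)) atTop (nhds 0) := by
    refine (ENNReal.tendsto_toReal_iff (fun N => measure_ne_top μ _) ENNReal.zero_ne_top).1 ?_
    simpa [hCtoReal] using hreal0
  -- identification of the existence event with the complement of C N
  have hEeq : ∀ N : ℕ,
      {ω | ∃ i : Fin N, u₁ * a 0 N ≤ Y 0 i ω ∧ u₂ * a 1 N ≤ Y 1 i ω} = (C N)ᶜ := by
    intro N
    ext ω
    simp only [Set.mem_setOf_eq, Set.mem_compl_iff, hCdef]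
    constructor
    · rintro ⟨i, h1, h2⟩ hmem
      exact (Set.mem_iInter₂.1 hmem i (Finset.mem_range.2 i.isLt)) ⟨h1, h2⟩
    · intro hω
      by_contra hno
      apply hω
      refine Set.mem_iInter₂.2 (fun i hi => ?_)
      intro hmem
      exact hno ⟨⟨i, Finset.mem_range.1 hi⟩, hmem.1, hmem.2⟩
  constructor
  · -- first assertion
    have hmain : Tendsto (fun N : ℕ => 1 - μ (C N)) atTop (nhds 1) := by
      have hc : Tendsto (fun N : ℕ => (1:ENNReal) - μ (C N)) atTop (nhds (1 - 0)) :=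
        ((ENNReal.continuous_sub_left ENNReal.one_ne_top).tendsto 0).comp hmuC0
      simpa using hc
    refine hmain.congr (fun N => ?_)
    rw [hEeq N, prob_compl_eq_one_sub (hmeasC N)]
  · -- second assertion
    intro ε hε
    refine tendsto_of_tendsto_of_tendsto_of_le_of_le' tendsto_const_nhds hmuC0
      (Eventually.of_forall fun N => zero_le) ?_
    filter_upwards [(ha_top 0).eventually_gt_atTop 0, (ha_top 1).eventually_gt_atTop 0]
      with N ha0 ha1
    refine measure_mono (fun ω hω => ?_)
    refine Set.mem_iInter₂.2 (fun i hi => ?_)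
    intro hmem
    have hi' : i < N := Finset.mem_range.1 hi
    have hterm : u₁ + u₂ ≤ Y 0 i ω / a 0 N + Y 1 i ω / a 1 N :=
      add_le_add ((le_div_iff₀ ha0).2 hmem.1) ((le_div_iff₀ ha1).2 hmem.2)
    have hsup : Y 0 i ω / a 0 N + Y 1 i ω / a 1 N
        ≤ ⨆ k : Fin N, (Y 0 k ω / a 0 N + Y 1 k ω / a 1 N) :=
      le_ciSup (f := fun k : Fin N => Y 0 (k : ℕ) ω / a 0 N + Y 1 (k : ℕ) ω / a 1 N)
        (Set.Finite.bddAbove (Set.finite_range _)) (⟨i, hi'⟩ : Fin N)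
    have hω' : (⨆ k : Fin N, (Y 0 k ω / a 0 N + Y 1 k ω / a 1 N)) < u₁ + u₂ - ε := hω
    linarith
end
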